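/- In a locally finite G-tree, all vertex stabilizers are commensurable: if T is a G-tree in which every vertex has finitely many neighbors, then for any two vertices u, v, the intersection stabilizer(u) ⊓ stabilizer(v) has finite index in both stabilizer(u) and stabilizer(v). -/
import Mathlib

/-- A `G`-tree: a simple graph `T` on vertex set `V` that is a tree (connected and acyclic),
together with an action of `G` on `V` by automorphisms of `T` (adjacency is preserved)
and without inversions. -/
structure IsGTree (G : Type*) [Group G] {V : Type*} [MulAction G V] (T : SimpleGraph V) :
    Prop where
  isTree : T.IsTree
  adj_smul : ∀ (g : G) (u v : V), T.Adj u v → T.Adj (g • u) (g • v)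
  no_inversions : ∀ (g : G) (u v : V), T.Adj u v → ¬(g • u = v ∧ g • v = u)

/-- Balls are finite in a locally finite connected graph. -/
lemma ball_finite {V : Type*} (T : SimpleGraph V) (hc : T.Connected)
    (hlf : ∀ v : V, (T.neighborSet v).Finite) (u : V) (n : ℕ) :
    {w : V | T.dist u w ≤ n}.Finite := by
  induction n with
  | zero =>
    apply Set.Finite.subset (Set.finite_singleton u)
    intro w hw
    simp only [Set.mem_setOf_eq, Nat.le_zero] at hw
    exact ((hc.dist_eq_zero_iff).mp hw).symm
  | succ n ih =>
    apply Set.Finite.subset (ih.union (Set.Finite.biUnion ih (fun x _ => hlf x)))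
    intro w hw
    simp only [Set.mem_setOf_eq] at hw
    rcases Nat.lt_or_ge (T.dist u w) (n+1) with h | h
    · exact Or.inl (Nat.lt_succ_iff.mp h)
    · have hd : T.dist u w = n + 1 := le_antisymm hw h
      obtain ⟨p, hp⟩ := hc.exists_walk_length_eq_dist u w
      rw [hd] at hp
      have := p.reverse
      cases hq : p.reverse with
      | nil =>
        exfalso
        have := congrArg SimpleGraph.Walk.length hq
        rw [SimpleGraph.Walk.length_reverse, hp] at this
        simp at this
      | cons hadj q =>
        refine Or.inr ?_
        rename_i x
        have hlen : q.length = n := by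
          have := congrArg SimpleGraph.Walk.length hq
          rw [SimpleGraph.Walk.length_reverse, hp] at this
          simpa using this.symm
        have hx : T.dist u x ≤ n := by
          calc T.dist u x = T.dist x u := T.dist_comm
          _ ≤ q.length := SimpleGraph.dist_le q
          _ = n := hlen
        exact Set.mem_biUnion hx hadj.symm

/-- In a locally finite `G`-tree all vertex stabilizers are commensurable: for any two
vertices `u, v`, the intersection of their stabilizers has finite index in both. -/
theorem stabilizers_commensurable_of_locallyFinite
    (G : Type*) [Group G] (V : Type*) [MulAction G V] (T : SimpleGraph V)
    (hT : IsGTree G T)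
    (hlf : ∀ v : V, (T.neighborSet v).Finite) :
    ∀ u v : V,
      (((MulAction.stabilizer G u ⊓ MulAction.stabilizer G v).subgroupOf
        (MulAction.stabilizer G u)).FiniteIndex) ∧
      (((MulAction.stabilizer G u ⊓ MulAction.stabilizer G v).subgroupOf
        (MulAction.stabilizer G v)).FiniteIndex) := by
  have hc : T.Connected := hT.isTree.isConnected
  -- the action preserves distances (at least: doesn't increase them)
  have hdist : ∀ (g : G) (a b : V), T.dist (g • a) (g • b) ≤ T.dist a b := by
    intro g a b
    obtain ⟨p, hp⟩ := hc.exists_walk_length_eq_dist a b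
    let f : T →g T := ⟨fun x => g • x, fun h => hT.adj_smul g _ _ h⟩
    calc T.dist (g • a) (g • b) ≤ (p.map f).length := SimpleGraph.dist_le _
    _ = p.length := p.length_map f
    _ = T.dist a b := hp
  -- main step
  have key : ∀ u v : V,
      (((MulAction.stabilizer G u ⊓ MulAction.stabilizer G v).subgroupOf
        (MulAction.stabilizer G u)).FiniteIndex) := by
    intro u v
    set H := MulAction.stabilizer G u
    have hstab : (MulAction.stabilizer G u ⊓ MulAction.stabilizer G v).subgroupOf H
        = MulAction.stabilizer H v := by
      ext h
      simp only [Subgroup.mem_subgroupOf, Subgroup.mem_inf, MulAction.mem_stabilizer_iff]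
      constructor
      · rintro ⟨-, h2⟩; exact h2
      · intro h2; exact ⟨h.2, h2⟩
    rw [hstab]
    constructor
    rw [MulAction.index_stabilizer]
    have horb : MulAction.orbit H v ⊆ {w : V | T.dist u w ≤ T.dist u v} := by
      rintro w ⟨g, rfl⟩
      have hg : (g : G) • u = u := g.2
      show T.dist u ((g : G) • v) ≤ T.dist u v
      calc T.dist u ((g : G) • v) = T.dist ((g : G) • u) ((g : G) • v) := by rw [hg]
      _ ≤ T.dist u v := hdist _ _ _
    have hfin : (MulAction.orbit H v).Finite :=
      (ball_finite T hc hlf u (T.dist u v)).subset horb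
    have hne : (MulAction.orbit H v).Nonempty := ⟨v, MulAction.mem_orbit_self v⟩
    exact (Set.ncard_pos hfin).mpr hne |>.ne'
  intro u v
  refine ⟨key u v, ?_⟩
  rw [inf_comm]
  exact key v u
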